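/- Let N ≥ 1, 𝕌 a nonempty compact topological space, q_{ij} : 𝕌 → ℝ continuous with q_{ij}(u) ≥ 0 for i ≠ j and Σ_j q_{ij}(u) = 0 for all i, u, r : {1,…,N} × 𝕌 → ℝ continuous, and G(h)_i = min_{u∈𝕌} [ r(i,u) + Σ_j q_{ij}(u) h_j ]. Assume uniform irreducibility: there exist δ > 0 and a matrix Q̄ = [q̄_{ij}] with q̄_{ij} ≥ 0 for i ≠ j, such that q_{ij}(u) ≥ δ·q̄_{ij} for all i ≠ j and u ∈ 𝕌, and for every nonempty proper subset S ⊊ {1,…,N} there exist i ∈ S, j ∉ S with q̄_{ij} > 0. Let (V*, β) ∈ ℝ^N × ℝ satisfy G(V*) = β·𝟏 and V*_N = 0. Then for every g ∈ ℝ^N, the differentiable solution h : [0,∞) → ℝ^N of the relative value iteration ODE ḣ(t) = G(h(t)) − h_N(t)·𝟏 with h(0) = g satisfies h(t) → V* + β·𝟏 as t → ∞. -/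

import Mathlib

open Filter

open Set Topology

lemma helper_mono (φ dφ : ℝ → ℝ) {t₁ t₂ : ℝ} (h0 : 0 ≤ t₁) (h12 : t₁ ≤ t₂)
    (hd : ∀ τ ∈ Icc t₁ t₂, HasDerivWithinAt φ (dφ τ) (Ici 0) τ)
    (hpos : ∀ τ ∈ Ioo t₁ t₂, 0 ≤ dφ τ) : φ t₁ ≤ φ t₂ := by
  rcases eq_or_lt_of_le h12 with rfl | hlt
  · exact le_rfl
  have hsub : Icc t₁ t₂ ⊆ Ici (0:ℝ) := fun x hx => le_trans h0 hx.1
  have hmono : MonotoneOn φ (Icc t₁ t₂) := by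
    apply monotoneOn_of_deriv_nonneg (convex_Icc t₁ t₂)
    · exact fun τ hτ => ((hd τ hτ).continuousWithinAt).mono hsub
    · rw [interior_Icc]
      intro τ hτ
      have hda : HasDerivAt φ (dφ τ) τ :=
        (hd τ (Ioo_subset_Icc_self hτ)).hasDerivAt (Ici_mem_nhds (lt_of_le_of_lt h0 hτ.1))
      exact hda.differentiableAt.differentiableWithinAt
    · rw [interior_Icc]
      intro τ hτ
      have hda : HasDerivAt φ (dφ τ) τ :=
        (hd τ (Ioo_subset_Icc_self hτ)).hasDerivAt (Ici_mem_nhds (lt_of_le_of_lt h0 hτ.1))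
      rw [hda.deriv]; exact hpos τ hτ
  exact hmono (left_mem_Icc.2 h12) (right_mem_Icc.2 h12) h12

lemma helper_exp {Λ : ℝ} (hΛ : 0 ≤ Λ) (φ dφ : ℝ → ℝ) {t₁ t₂ : ℝ} (h0 : 0 ≤ t₁) (h12 : t₁ ≤ t₂) {κ : ℝ}
    (hκ : 0 ≤ κ)
    (hd : ∀ τ ∈ Icc t₁ t₂, HasDerivWithinAt φ (dφ τ) (Ici 0) τ)
    (hb : ∀ τ ∈ Icc t₁ t₂, -Λ * φ τ + κ ≤ dφ τ) :
    Real.exp (-Λ * (t₂ - t₁)) * (φ t₁ + κ * (t₂ - t₁)) ≤ φ t₂ := by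
  have key : Real.exp (Λ * t₁) * φ t₁ - κ * Real.exp (Λ * t₁) * t₁ ≤
      Real.exp (Λ * t₂) * φ t₂ - κ * Real.exp (Λ * t₁) * t₂ := by
    apply helper_mono (fun τ => Real.exp (Λ * τ) * φ τ - κ * Real.exp (Λ * t₁) * τ)
      (fun τ => (Λ * Real.exp (Λ * τ) * φ τ + Real.exp (Λ * τ) * dφ τ) - κ * Real.exp (Λ * t₁))
      h0 h12
    · intro τ hτ
      have he : HasDerivAt (fun τ => Real.exp (Λ * τ)) (Λ * Real.exp (Λ * τ)) τ := by
        have := (Real.hasDerivAt_exp (Λ * τ)).comp τ ((hasDerivAt_id τ).const_mul Λ)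
        exact this.congr_deriv (by simp only [Function.comp_apply, id_eq, mul_one]; ring)
      have := (he.hasDerivWithinAt.mul (hd τ hτ)).sub
        (((hasDerivAt_id τ).const_mul (κ * Real.exp (Λ * t₁))).hasDerivWithinAt)
      refine this.congr_deriv ?_
      ring
    · intro τ hτ
      have h1 : -Λ * φ τ + κ ≤ dφ τ := hb τ (Ioo_subset_Icc_self hτ)
      have h2 : Real.exp (Λ * t₁) ≤ Real.exp (Λ * τ) :=
        Real.exp_le_exp.2 (mul_le_mul_of_nonneg_left hτ.1.le hΛ)
      have h3 : (0:ℝ) < Real.exp (Λ * τ) := Real.exp_pos _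
      nlinarith [mul_le_mul_of_nonneg_left h1 h3.le]
  have e2 : (0:ℝ) < Real.exp (Λ * t₂) := Real.exp_pos _
  rw [show -Λ * (t₂ - t₁) = Λ * t₁ - Λ * t₂ by ring, Real.exp_sub, div_mul_eq_mul_div,
    div_le_iff₀ e2]
  nlinarith [key]


lemma sup_antitone {ι : Type*} [Fintype ι] [Nonempty ι] (f d : ℝ → ι → ℝ)
    (hderiv : ∀ τ ∈ Ici (0:ℝ), ∀ i, HasDerivWithinAt (fun z => f z i) (d τ i) (Ici 0) τ)
    (hcond : ∀ τ ∈ Ici (0:ℝ), ∀ i, (∀ j, f τ j ≤ f τ i) → d τ i ≤ 0)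
    {s t : ℝ} (hs : 0 ≤ s) (hst : s ≤ t) : (⨆ j, f t j) ≤ ⨆ j, f s j := by
  set A : ℝ → ℝ := fun τ => ⨆ j, f τ j with hA
  have hbdd : ∀ τ, BddAbove (Set.range (f τ)) := fun τ => (Set.finite_range _).bddAbove
  have hle : ∀ τ i, f τ i ≤ A τ := fun τ i => le_ciSup (hbdd τ) i
  have hmax : ∀ τ, ∃ i, f τ i = A τ := by
    intro τ
    obtain ⟨i, hi⟩ := Finite.exists_max (f τ)
    exact ⟨i, le_antisymm (hle τ i) (ciSup_le hi)⟩
  suffices hkey : ∀ ε > 0, A t ≤ A s + ε * (t - s) by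
    refine le_of_forall_pos_le_add fun η hη => ?_
    have := hkey (η / (t - s + 1)) (div_pos hη (by linarith))
    have h2 : (η / (t - s + 1)) * (t - s) ≤ η := by
      rw [div_mul_eq_mul_div, div_le_iff₀ (by linarith)]
      nlinarith
    linarith
  intro ε hε
  set S : Set ℝ := {τ ∈ Icc s t | A τ ≤ A s + ε * (τ - s)} with hS
  have hsS : s ∈ S := ⟨⟨le_rfl, hst⟩, by simp⟩
  have hSb : BddAbove S := ⟨t, fun τ hτ => hτ.1.2⟩
  set T := sSup S with hT
  have hTcl : T ∈ closure S := csSup_mem_closure ⟨s, hsS⟩ hSb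
  have hTIcc : T ∈ Icc s t := closure_minimal (fun τ hτ => hτ.1) isClosed_Icc hTcl
  have hT0 : (0:ℝ) ≤ T := le_trans hs hTIcc.1
  have hsub : S ⊆ Ici (0:ℝ) := fun τ hτ => le_trans hs hτ.1.1
  have hTS : T ∈ S := by
    refine ⟨hTIcc, ?_⟩
    haveI hne : (𝓝[S] T).NeBot := mem_closure_iff_nhdsWithin_neBot.1 hTcl
    have hAle : ∀ i, f T i ≤ A s + ε * (T - s) := by
      intro i
      have hc : ContinuousWithinAt (fun τ => f τ i - ε * (τ - s)) S T := by
        apply ContinuousWithinAt.sub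
        · exact ((hderiv T hT0 i).continuousWithinAt).mono hsub
        · exact (continuous_const.mul (continuous_id.sub continuous_const)).continuousWithinAt
      have h4 : f T i - ε * (T - s) ≤ A s := by
        refine le_of_tendsto hc ?_
        filter_upwards [self_mem_nhdsWithin] with τ hτ
        have h5 : f τ i ≤ A τ := hle τ i
        have h6 := hτ.2
        linarith
      linarith
    exact ciSup_le hAle
  rcases eq_or_lt_of_le hTIcc.2 with hTt | hTt
  · rw [← hTt]; exact hTS.2
  · exfalso
    have hev : ∀ i, ∀ᶠ z in 𝓝[>] T, f z i ≤ A T + ε * (z - T) := by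
      intro i
      have hIoi : Ioi T ⊆ Ici 0 \ {T} := fun z hz =>
        ⟨le_trans hT0 (le_of_lt hz), ne_of_gt hz⟩
      rcases eq_or_lt_of_le (hle T i) with hi | hi
      · -- argmax : use the derivative
        have hd0 : d T i ≤ 0 := hcond T hT0 i (fun j => by rw [hi]; exact hle T j)
        have hslope := hasDerivWithinAt_iff_tendsto_slope.1 (hderiv T hT0 i)
        have h2 : Tendsto (slope (fun z => f z i) T) (𝓝[>] T) (𝓝 (d T i)) :=
          hslope.mono_left (nhdsWithin_mono _ hIoi)
        have h3 : ∀ᶠ z in 𝓝[>] T, slope (fun z => f z i) T z < ε :=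
          h2.eventually_lt_const (lt_of_le_of_lt hd0 hε)
        filter_upwards [h3, self_mem_nhdsWithin] with z hz hzT
        rw [slope_def_field] at hz
        have hzT' : (0:ℝ) < z - T := sub_pos.2 hzT
        rw [div_lt_iff₀ hzT'] at hz
        have : f z i < f T i + ε * (z - T) := by linarith
        rw [hi] at this
        linarith
      · -- not argmax : use continuity
        have hc : ContinuousWithinAt (fun z => f z i) (Ici 0) T :=
          (hderiv T hT0 i).continuousWithinAt
        have h2 : ∀ᶠ z in 𝓝[Ici 0] T, f z i < A T := hc.eventually_lt_const hi
        have h3 : ∀ᶠ z in 𝓝[>] T, f z i < A T :=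
          h2.filter_mono (nhdsWithin_mono _ (fun z hz => (hIoi hz).1))
        filter_upwards [h3, self_mem_nhdsWithin] with z hz hzT
        nlinarith [sub_pos.2 (show T < z from hzT)]
    have hall : ∀ᶠ z in 𝓝[>] T, ∀ i, f z i ≤ A T + ε * (z - T) := eventually_all.2 hev
    have hIoc : Ioc T t ∈ 𝓝[>] T := Ioc_mem_nhdsGT_of_mem ⟨le_rfl, hTt⟩
    obtain ⟨z, hz1, hz2⟩ := (hall.and (eventually_mem_set.2 hIoc)).exists
    have hzS : z ∈ S := by
      refine ⟨⟨le_trans hTIcc.1 hz2.1.le, hz2.2⟩, ?_⟩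
      have : A z ≤ A T + ε * (z - T) := ciSup_le hz1
      have hTb := hTS.2
      have : A z ≤ A s + ε * (T - s) + ε * (z - T) := by linarith
      calc A z ≤ A s + ε * (T - s) + ε * (z - T) := this
        _ = A s + ε * (z - s) := by ring
    exact absurd (le_csSup hSb hzS) (not_le.2 hz2.1)


open scoped Classical in
noncomputable def reach {N : ℕ} (qbar : Fin N → Fin N → ℝ) (k : Fin N) : ℕ → Finset (Fin N)
  | 0 => {k}
  | (p+1) => reach qbar k p ∪ Finset.univ.filter (fun j => ∃ l ∈ reach qbar k p, 0 < qbar j l)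

set_option maxHeartbeats 1600000 in
/-- Convergence of the relative value iteration for the continuous-time controlled
Markov chain: under uniform irreducibility, if `(V*, β)` satisfies `G(V*) = β·𝟏` and
`V*_N = 0`, then every solution of `ḣ(t) = G(h(t)) − h_N(t)·𝟏` converges, as
`t → ∞`, to `V* + β·𝟏`. -/
theorem stmt_14 (N : ℕ) (hN : 1 ≤ N) (𝕌 : Type*) [TopologicalSpace 𝕌]
    [CompactSpace 𝕌] [Nonempty 𝕌]
    (q : Fin N → Fin N → 𝕌 → ℝ) (hqc : ∀ i j, Continuous (q i j))
    (hqoff : ∀ i j, i ≠ j → ∀ u, 0 ≤ q i j u)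
    (hqrow : ∀ i u, ∑ j, q i j u = 0)
    (r : Fin N → 𝕌 → ℝ) (hrc : ∀ i, Continuous (r i))
    (G : (Fin N → ℝ) → Fin N → ℝ)
    (hG : ∀ v i, G v i = sInf (Set.range fun u => r i u + ∑ j, q i j u * v j))
    (δ : ℝ) (hδ : 0 < δ) (qbar : Fin N → Fin N → ℝ)
    (hqbar : ∀ i j, i ≠ j → 0 ≤ qbar i j)
    (hminor : ∀ i j, i ≠ j → ∀ u, δ * qbar i j ≤ q i j u)
    (hirr : ∀ S : Set (Fin N), S.Nonempty → S ≠ Set.univ →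
      ∃ i ∈ S, ∃ j ∉ S, 0 < qbar i j)
    (Vstar : Fin N → ℝ) (β : ℝ) (hHJB : ∀ i, G Vstar i = β)
    (hnorm : Vstar ⟨N - 1, by omega⟩ = 0)
    (g : Fin N → ℝ) (h : ℝ → Fin N → ℝ) (hinit : h 0 = g)
    (hode : ∀ t ∈ Set.Ici (0 : ℝ),
      HasDerivWithinAt h (fun i => G (h t) i - h t ⟨N - 1, by omega⟩)
        (Set.Ici (0 : ℝ)) t) :
    Tendsto (fun t => h t) atTop (nhds (fun i => Vstar i + β)) := by
  classical
  haveI : Nonempty (Fin N) := ⟨⟨N - 1, by omega⟩⟩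
  set N' : Fin N := ⟨N - 1, by omega⟩ with hN'def
  -- continuity of the vector field data
  have hcontsum : ∀ (v : Fin N → ℝ) i, Continuous (fun u => r i u + ∑ j, q i j u * v j) :=
    fun v i => (hrc i).add (continuous_finset_sum _ fun j _ => (hqc i j).mul continuous_const)
  have hGle : ∀ (v : Fin N → ℝ) i u, G v i ≤ r i u + ∑ j, q i j u * v j := by
    intro v i u
    rw [hG]
    exact csInf_le (isCompact_range (hcontsum v i)).bddBelow ⟨u, rfl⟩
  have hGmem : ∀ (v : Fin N → ℝ) i, ∃ u, G v i = r i u + ∑ j, q i j u * v j := by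
    intro v i
    have := (isCompact_range (hcontsum v i)).sInf_mem (Set.range_nonempty _)
    rw [hG]
    obtain ⟨u, hu⟩ := this
    exact ⟨u, hu.symm⟩
  have hGshift : ∀ (v : Fin N → ℝ) (z : ℝ) i, G (fun j => v j + z) i = G v i := by
    intro v z i
    have hfe : (fun u => r i u + ∑ j, q i j u * (v j + z))
        = (fun u => r i u + ∑ j, q i j u * v j) := by
      funext u
      have : ∑ j, q i j u * (v j + z) = ∑ j, q i j u * v j + (∑ j, q i j u) * z := by
        rw [Finset.sum_mul, ← Finset.sum_add_distrib]
        exact Finset.sum_congr rfl fun j _ => by ring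
      rw [this, hqrow, zero_mul, add_zero]
    simp only [hG]
    rw [hfe]
  have hsum : ∀ i u (x : Fin N → ℝ),
      ∑ j, q i j u * x j = ∑ j ∈ Finset.univ.erase i, q i j u * (x j - x i) := by
    intro i u x
    have h1 : ∑ j, q i j u * x j
        = ∑ j, q i j u * (x j - x i) + (∑ j, q i j u) * x i := by
      rw [Finset.sum_mul, ← Finset.sum_add_distrib]
      exact Finset.sum_congr rfl fun j _ => by ring
    rw [h1, hqrow, zero_mul, add_zero]
    rw [← Finset.add_sum_erase _ _ (Finset.mem_univ i)]
    simp
  -- the bound Λ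
  obtain ⟨Λ, hΛ0, hΛ⟩ : ∃ Λ, 0 ≤ Λ ∧ ∀ i u, ∑ j ∈ Finset.univ.erase i, q i j u ≤ Λ := by
    have hex : ∀ i : Fin N, ∃ M, ∀ u, ∑ j ∈ Finset.univ.erase i, q i j u ≤ M := by
      intro i
      obtain ⟨M, hM⟩ := (isCompact_range
        (continuous_finset_sum _ fun j _ => hqc i j : Continuous
          (fun u => ∑ j ∈ Finset.univ.erase i, q i j u))).bddAbove
      exact ⟨M, fun u => hM ⟨u, rfl⟩⟩
    choose M hM using hex
    refine ⟨max 0 (Finset.univ.sup' Finset.univ_nonempty M), le_max_left _ _, ?_⟩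
    intro i u
    exact le_trans (hM i u) (le_trans (Finset.le_sup' M (Finset.mem_univ i)) (le_max_right _ _))
  -- the bound γ
  obtain ⟨γ, hγ0, hγ⟩ : ∃ γ > 0, ∀ i j, 0 < qbar i j → γ ≤ qbar i j := by
    set E := (Finset.univ : Finset (Fin N × Fin N)).filter (fun p => 0 < qbar p.1 p.2) with hE
    by_cases hEne : E.Nonempty
    · refine ⟨E.inf' hEne (fun p => qbar p.1 p.2), ?_, ?_⟩
      · rw [gt_iff_lt, Finset.lt_inf'_iff]
        intro p hp
        exact (Finset.mem_filter.1 hp).2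
      · intro i j hij
        have hmem : (i, j) ∈ E := Finset.mem_filter.2 ⟨Finset.mem_univ (i, j), hij⟩
        exact Finset.inf'_le (f := fun p => qbar p.1 p.2) hmem
    · refine ⟨1, one_pos, fun i j hij => absurd ?_ hEne⟩
      exact ⟨(i, j), Finset.mem_filter.2 ⟨Finset.mem_univ _, hij⟩⟩
  -- continuity of h and construction of c, w
  have hconth : ContinuousOn h (Ici 0) := fun τ hτ => (hode τ hτ).continuousWithinAt
  set K : ℝ → ℝ := fun τ => h (max τ 0) N' - β with hKdef
  have hKcont : Continuous K := by
    have h1 : Continuous (fun τ : ℝ => h (max τ 0)) :=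
      hconth.comp_continuous (continuous_id.max continuous_const) (fun x => Set.mem_Ici.2 (le_max_right _ _))
    exact ((continuous_apply N').comp h1).sub continuous_const
  set c : ℝ → ℝ := fun t => ∫ s in (0:ℝ)..t, K s with hcdef
  have hcderiv : ∀ t, HasDerivAt c (K t) t := by
    intro t
    exact intervalIntegral.integral_hasDerivAt_right (hKcont.intervalIntegrable _ _)
      (hKcont.stronglyMeasurableAtFilter _ _) hKcont.continuousAt
  set w : ℝ → Fin N → ℝ := fun t i => h t i + c t - Vstar i with hwdef
  set P : ℝ → Fin N → ℝ := fun t i => G (h t) i - β with hPdef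
  have hw' : ∀ t ∈ Ici (0:ℝ), ∀ i, HasDerivWithinAt (fun τ => w τ i) (P t i) (Ici 0) t := by
    intro t ht i
    have h1 : HasDerivWithinAt (fun τ => h τ i) (G (h t) i - h t N') (Ici 0) t :=
      hasDerivWithinAt_pi.1 (hode t ht) i
    have h2 := (h1.add (hcderiv t).hasDerivWithinAt).sub_const (Vstar i)
    refine h2.congr_deriv ?_
    have : max t 0 = t := max_eq_left ht
    simp only [hKdef, this, hPdef]
    ring
  have hPw : ∀ t i, P t i = G (fun j => Vstar j + w t j) i - β := by
    intro t i
    have : (fun j => Vstar j + w t j) = fun j => h t j + c t := by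
      funext j; simp only [hwdef]; ring
    rw [this, hGshift (h t) (c t) i]
  -- sup and inf of w
  set a : ℝ → ℝ := fun t => ⨆ i, w t i with hadef
  set b : ℝ → ℝ := fun t => -⨆ i, -(w t i) with hbdef
  have hbdd : ∀ t, BddAbove (Set.range (fun i => w t i)) := fun t => (Set.finite_range _).bddAbove
  have hbdd' : ∀ t, BddAbove (Set.range (fun i => -(w t i))) :=
    fun t => (Set.finite_range _).bddAbove
  have hlea : ∀ t i, w t i ≤ a t := fun t i => le_ciSup (hbdd t) i
  have hble : ∀ t i, b t ≤ w t i := by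
    intro t i
    have := le_ciSup (hbdd' t) i
    simp only [hbdef]
    linarith
  have hbglb : ∀ t x, (∀ i, x ≤ w t i) → x ≤ b t := by
    intro t x hx
    have : (⨆ i, -(w t i)) ≤ -x := ciSup_le fun i => by linarith [hx i]
    simp only [hbdef]
    linarith
  have hamax : ∀ t, ∃ k, w t k = a t := by
    intro t
    obtain ⟨k, hk⟩ := Finite.exists_max (w t)
    exact ⟨k, le_antisymm (hlea t k) (ciSup_le hk)⟩
  have hspan : ∀ t, 0 ≤ a t - b t := fun t => by linarith [hble t N', hlea t N']
  -- sign of P at argmax / argmin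
  have hPmax : ∀ t i, (∀ j, w t j ≤ w t i) → P t i ≤ 0 := by
    intro t i hmax
    obtain ⟨u', hu'⟩ := hGmem Vstar i
    have h1 : G (fun j => Vstar j + w t j) i ≤ r i u' + ∑ j, q i j u' * (Vstar j + w t j) :=
      hGle _ i u'
    have h2 : ∑ j, q i j u' * (Vstar j + w t j)
        = ∑ j, q i j u' * Vstar j + ∑ j, q i j u' * w t j := by
      rw [← Finset.sum_add_distrib]
      exact Finset.sum_congr rfl fun j _ => by ring
    have h3 : ∑ j, q i j u' * w t j ≤ 0 := by
      rw [hsum i u' (w t)]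
      apply Finset.sum_nonpos
      intro j hj
      have hji : j ≠ i := (Finset.mem_erase.1 hj).1
      have hq := hqoff i j (Ne.symm hji) u'
      nlinarith [hmax j]
    have hβ : r i u' + ∑ j, q i j u' * Vstar j = β := by rw [← hu', hHJB]
    have := hPw t i
    rw [this]
    linarith
  have hPmin : ∀ t i, (∀ j, w t i ≤ w t j) → 0 ≤ P t i := by
    intro t i hmin
    obtain ⟨u, hu⟩ := hGmem (fun j => Vstar j + w t j) i
    have hβ : β ≤ r i u + ∑ j, q i j u * Vstar j := by
      rw [← hHJB i]; exact hGle Vstar i u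
    have h2 : ∑ j, q i j u * (Vstar j + w t j)
        = ∑ j, q i j u * Vstar j + ∑ j, q i j u * w t j := by
      rw [← Finset.sum_add_distrib]
      exact Finset.sum_congr rfl fun j _ => by ring
    have h3 : 0 ≤ ∑ j, q i j u * w t j := by
      rw [hsum i u (w t)]
      apply Finset.sum_nonneg
      intro j hj
      have hji : j ≠ i := (Finset.mem_erase.1 hj).1
      have hq := hqoff i j (Ne.symm hji) u
      nlinarith [hmin j]
    have := hPw t i
    rw [this]
    linarith
  -- monotonicity of a and b
  have amono : ∀ s t, 0 ≤ s → s ≤ t → a t ≤ a s := by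
    intro s t hs hst
    exact sup_antitone w P (fun τ hτ i => hw' τ hτ i) (fun τ _ i hi => hPmax τ i hi) hs hst
  have bmono : ∀ s t, 0 ≤ s → s ≤ t → b s ≤ b t := by
    intro s t hs hst
    have key := sup_antitone (fun τ i => -(w τ i)) (fun τ i => -(P τ i))
      (fun τ hτ i => (hw' τ hτ i).neg)
      (fun τ _ i hi => by
        have hmin : ∀ j, w τ i ≤ w τ j := fun j => by linarith [hi j]
        linarith [hPmin τ i hmin]) hs hst
    simp only [hbdef]
    exact neg_le_neg key
  -- lower bounds on P
  have hPlow : ∀ (t : ℝ) (j : Fin N) (bs : ℝ), ∃ u,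
      ∑ m ∈ Finset.univ.erase j, q j m u * (w t m - bs) + q j j u * (w t j - bs) ≤ P t j := by
    intro t j bs
    obtain ⟨u, hu⟩ := hGmem (fun m => Vstar m + w t m) j
    refine ⟨u, ?_⟩
    have hβ : β ≤ r j u + ∑ m, q j m u * Vstar m := by
      rw [← hHJB j]; exact hGle Vstar j u
    have h2 : ∑ m, q j m u * (Vstar m + w t m)
        = ∑ m, q j m u * Vstar m + ∑ m, q j m u * w t m := by
      rw [← Finset.sum_add_distrib]
      exact Finset.sum_congr rfl fun m _ => by ring
    have h4 : ∑ m, q j m u * w t m = ∑ m, q j m u * (w t m - bs) := by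
      rw [hsum j u (w t), hsum j u (fun m => w t m - bs)]
      exact Finset.sum_congr rfl fun m _ => by ring
    have h5 : ∑ m, q j m u * (w t m - bs)
        = ∑ m ∈ Finset.univ.erase j, q j m u * (w t m - bs) + q j j u * (w t j - bs) := by
      rw [← Finset.add_sum_erase _ _ (Finset.mem_univ j)]
      ring
    have := hPw t j
    rw [this]
    linarith
  have hqjj : ∀ (j : Fin N) u, -Λ ≤ q j j u := by
    intro j u
    have h1 := hqrow j u
    have h2 : q j j u + ∑ m ∈ Finset.univ.erase j, q j m u = ∑ m, q j m u :=
      Finset.add_sum_erase Finset.univ (fun m => q j m u) (Finset.mem_univ j)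
    linarith [hΛ j u]
  have hvpos : ∀ (s t : ℝ), 0 ≤ s → s ≤ t → ∀ m, 0 ≤ w t m - b s :=
    fun s t hs hst m => by linarith [hble t m, bmono s t hs hst]
  have hPlow0 : ∀ (s t : ℝ), 0 ≤ s → s ≤ t → ∀ j, -Λ * (w t j - b s) ≤ P t j := by
    intro s t hs hst j
    obtain ⟨u, hu⟩ := hPlow t j (b s)
    have h1 : 0 ≤ ∑ m ∈ Finset.univ.erase j, q j m u * (w t m - b s) :=
      Finset.sum_nonneg fun m hm =>
        mul_nonneg (hqoff j m (Ne.symm (Finset.mem_erase.1 hm).1) u) (hvpos s t hs hst m)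
    have h2 : -Λ * (w t j - b s) ≤ q j j u * (w t j - b s) :=
      mul_le_mul_of_nonneg_right (hqjj j u) (hvpos s t hs hst j)
    linarith
  have hPlow1 : ∀ (s t : ℝ), 0 ≤ s → s ≤ t → ∀ j l, j ≠ l →
      δ * qbar j l * (w t l - b s) - Λ * (w t j - b s) ≤ P t j := by
    intro s t hs hst j l hjl
    obtain ⟨u, hu⟩ := hPlow t j (b s)
    have hl : l ∈ Finset.univ.erase j := Finset.mem_erase.2 ⟨Ne.symm hjl, Finset.mem_univ l⟩
    have h1 : δ * qbar j l * (w t l - b s) ≤ q j l u * (w t l - b s) :=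
      mul_le_mul_of_nonneg_right (hminor j l hjl u) (hvpos s t hs hst l)
    have h2 : q j l u * (w t l - b s) ≤ ∑ m ∈ Finset.univ.erase j, q j m u * (w t m - b s) :=
      Finset.single_le_sum (fun m hm =>
        mul_nonneg (hqoff j m (Ne.symm (Finset.mem_erase.1 hm).1) u) (hvpos s t hs hst m)) hl
    have h3 : -Λ * (w t j - b s) ≤ q j j u * (w t j - b s) :=
      mul_le_mul_of_nonneg_right (hqjj j u) (hvpos s t hs hst j)
    linarith
  -- reachability
  have hkmem : ∀ (k : Fin N) p, k ∈ reach qbar k p := by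
    intro k p
    induction p with
    | zero => simp [reach]
    | succ p ih => exact Finset.mem_union_left _ ih
  have hreach_subset : ∀ (k : Fin N) p, reach qbar k p ⊆ reach qbar k (p+1) := by
    intro k p
    rw [reach]
    exact Finset.subset_union_left
  have huniv : ∀ k : Fin N, reach qbar k (N-1) = Finset.univ := by
    intro k
    have hgrow : ∀ p, reach qbar k p = Finset.univ ∨ p + 1 ≤ (reach qbar k p).card := by
      intro p
      induction p with
      | zero =>
        right
        simp [reach]
      | succ p ih =>
        rcases ih with hu | hcard
        · left
          exact Finset.univ_subset_iff.1 (hu ▸ hreach_subset k p)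
        · by_cases hu2 : reach qbar k p = Finset.univ
          · left
            exact Finset.univ_subset_iff.1 (hu2 ▸ hreach_subset k p)
          · right
            obtain ⟨x, hx⟩ : ∃ x, x ∉ reach qbar k p := by
              by_contra hc
              push_neg at hc
              exact hu2 (Finset.eq_univ_iff_forall.2 hc)
            have hSne : ((↑(reach qbar k p) : Set (Fin N))ᶜ) ≠ Set.univ := by
              intro hc
              have hk2 : k ∈ ((↑(reach qbar k p) : Set (Fin N))ᶜ) := hc ▸ Set.mem_univ k
              exact hk2 (Finset.mem_coe.2 (hkmem k p))
            obtain ⟨i, hiS, j, hjS, hq⟩ := hirr ((↑(reach qbar k p) : Set (Fin N))ᶜ)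
              ⟨x, fun hc => hx (Finset.mem_coe.1 hc)⟩ hSne
            have hjR : j ∈ reach qbar k p := by
              by_contra hc
              exact hjS (fun hmem => hc (Finset.mem_coe.1 hmem))
            have hiNR : i ∉ reach qbar k p := fun hc => hiS (Finset.mem_coe.2 hc)
            have hiR : i ∈ reach qbar k (p+1) := by
              rw [reach]
              exact Finset.mem_union_right _
                (Finset.mem_filter.2 ⟨Finset.mem_univ i, ⟨j, hjR, hq⟩⟩)
            have hss : reach qbar k p ⊂ reach qbar k (p+1) :=
              ⟨hreach_subset k p, fun hsub => hiNR (hsub hiR)⟩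
            have := Finset.card_lt_card hss
            omega
    rcases hgrow (N-1) with hu | hcard
    · exact hu
    · apply Finset.eq_univ_of_card
      have h2 : (reach qbar k (N-1)).card ≤ N := by
        have := Finset.card_le_univ (reach qbar k (N-1))
        simpa using this
      rw [Fintype.card_fin]
      omega
  -- quantitative spreading
  have spread : ∀ p : ℕ, ∃ C > 0, ∀ k : Fin N, ∀ s, 0 ≤ s →
      ∀ j ∈ reach qbar k p, ∀ t, s + (p:ℝ) ≤ t → t ≤ s + (N:ℝ) →
      C * (w s k - b s) ≤ w t j - b s := by
    intro p
    induction p with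
    | zero =>
      refine ⟨Real.exp (-(Λ * N)), Real.exp_pos _, ?_⟩
      intro k s hs j hj t ht1 ht2
      have hjk : j = k := by simpa [reach] using hj
      subst hjk
      have hst : s ≤ t := by push_cast at ht1; linarith
      have key := helper_exp hΛ0 (fun τ => w τ j - b s) (fun τ => P τ j) hs hst
        (le_refl (0:ℝ))
        (fun τ hτ => (hw' τ (le_trans hs hτ.1) j).sub_const (b s))
        (fun τ hτ => by simpa using hPlow0 s τ hs hτ.1 j)
      have h1 : Real.exp (-(Λ*N)) ≤ Real.exp (-Λ*(t-s)) := by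
        apply Real.exp_le_exp.2
        nlinarith
      have h0 : 0 ≤ w s j - b s := hvpos s s hs le_rfl j
      nlinarith [key, mul_le_mul_of_nonneg_right h1 h0]
    | succ p ih =>
      obtain ⟨C, hC0, hCspread⟩ := ih
      refine ⟨min C (Real.exp (-(Λ * N)) * (δ * γ * C)), lt_min hC0 (by positivity), ?_⟩
      intro k s hs j hj t ht1 ht2
      have hm0 : 0 ≤ w s k - b s := hvpos s s hs le_rfl k
      have hCm : min C (Real.exp (-(Λ * N)) * (δ * γ * C)) ≤ C := min_le_left _ _
      have hsp0 : (0:ℝ) ≤ s + (p:ℝ) := by positivity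
      have ht1p : s + (p:ℝ) ≤ t := by push_cast at ht1 ⊢; linarith
      have hinR : ∀ j' ∈ reach qbar k p, min C (Real.exp (-(Λ * N)) * (δ * γ * C)) *
          (w s k - b s) ≤ w t j' - b s := by
        intro j' hj'
        have := hCspread k s hs j' hj' t ht1p ht2
        nlinarith [mul_le_mul_of_nonneg_right hCm hm0]
      rw [reach] at hj
      rcases Finset.mem_union.1 hj with hjp | hjf
      · exact hinR j hjp
      · by_cases hjp : j ∈ reach qbar k p
        · exact hinR j hjp
        · obtain ⟨l, hl, hql⟩ := (Finset.mem_filter.1 hjf).2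
          have hjl : j ≠ l := fun he => hjp (he ▸ hl)
          have hκ : 0 ≤ δ * γ * (C * (w s k - b s)) := by
            apply mul_nonneg (by positivity)
            exact mul_nonneg hC0.le hm0
          have key := helper_exp hΛ0 (fun τ => w τ j - b s) (fun τ => P τ j) hsp0 ht1p hκ
            (fun τ hτ => (hw' τ (le_trans hsp0 hτ.1) j).sub_const (b s))
            (fun τ hτ => by
              have hsτ : s ≤ τ := le_trans (by linarith [hτ.1] : s ≤ s + (p:ℝ)) hτ.1
              have hb1 := hPlow1 s τ hs hsτ j l hjl
              have hb2 : C * (w s k - b s) ≤ w τ l - b s :=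
                hCspread k s hs l hl τ hτ.1 (le_trans hτ.2 ht2)
              have hb3 : γ ≤ qbar j l := hγ j l hql
              have hb4 : 0 ≤ w τ l - b s := hvpos s τ hs hsτ l
              have hb5 : δ * γ * (C * (w s k - b s)) ≤ δ * qbar j l * (w τ l - b s) := by
                have hCm0 : 0 ≤ C * (w s k - b s) := mul_nonneg hC0.le hm0
                have h6 := mul_le_mul hb3 hb2 hCm0 (hqbar j l hjl)
                nlinarith [mul_le_mul_of_nonneg_left h6 hδ.le]
              linarith)
          have hφ0 : 0 ≤ w (s + (p:ℝ)) j - b s :=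
            hvpos s (s + (p:ℝ)) hs (le_add_of_nonneg_right (Nat.cast_nonneg p)) j
          have hΔ1 : (1:ℝ) ≤ t - (s + (p:ℝ)) := by push_cast at ht1; linarith
          have hΔN : t - (s + (p:ℝ)) ≤ (N:ℝ) := by
            push_cast at ht2 ⊢
            linarith [Nat.cast_nonneg (α := ℝ) p]
          have hE : Real.exp (-(Λ * N)) ≤ Real.exp (-Λ * (t - (s + (p:ℝ)))) := by
            apply Real.exp_le_exp.2
            nlinarith [mul_le_mul_of_nonneg_left hΔN hΛ0]
          have h7 : δ * γ * (C * (w s k - b s)) * 1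
              ≤ δ * γ * (C * (w s k - b s)) * (t - (s + (p:ℝ))) :=
            mul_le_mul_of_nonneg_left hΔ1 hκ
          have h8 : Real.exp (-(Λ * N)) * (δ * γ * (C * (w s k - b s)))
              ≤ Real.exp (-Λ * (t - (s + (p:ℝ)))) *
                ((w (s + (p:ℝ)) j - b s) + δ * γ * (C * (w s k - b s)) * (t - (s + (p:ℝ)))) := by
            apply mul_le_mul hE ?_ hκ (Real.exp_pos _).le
            nlinarith [h7, hφ0]
          have h9 : min C (Real.exp (-(Λ * N)) * (δ * γ * C)) * (w s k - b s)
              ≤ Real.exp (-(Λ * N)) * (δ * γ * (C * (w s k - b s))) := by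
            have h10 : min C (Real.exp (-(Λ * N)) * (δ * γ * C))
                ≤ Real.exp (-(Λ * N)) * (δ * γ * C) := min_le_right _ _
            nlinarith [mul_le_mul_of_nonneg_right h10 hm0]
          linarith [key, h8, h9]
  -- contraction of the span
  obtain ⟨C, hC0, hspread⟩ := spread (N-1)
  set ρ : ℝ := 1 - min C 1 with hρdef
  have hρ0 : 0 ≤ ρ := by
    have := min_le_right C 1
    simp only [hρdef]
    linarith
  have hρ1 : ρ < 1 := by
    have : 0 < min C 1 := lt_min hC0 one_pos
    simp only [hρdef]
    linarith
  have hNN : ((N-1 : ℕ):ℝ) ≤ (N:ℝ) := by exact_mod_cast Nat.sub_le N 1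
  have hcontr : ∀ s, 0 ≤ s → a (s + (N:ℝ)) - b (s + (N:ℝ)) ≤ ρ * (a s - b s) := by
    intro s hs
    obtain ⟨k, hk⟩ := hamax s
    have hm0 : 0 ≤ a s - b s := hspan s
    have hcast : s + ((N-1 : ℕ):ℝ) ≤ s + (N:ℝ) := by linarith
    have hall : ∀ j, min C 1 * (a s - b s) ≤ w (s + (N:ℝ)) j - b s := by
      intro j
      have hj : j ∈ reach qbar k (N-1) := by rw [huniv k]; exact Finset.mem_univ j
      have h1 := hspread k s hs j hj (s + (N:ℝ)) hcast le_rfl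
      rw [hk] at h1
      nlinarith [mul_le_mul_of_nonneg_right (min_le_left C 1) hm0]
    have hbN : b s + min C 1 * (a s - b s) ≤ b (s + (N:ℝ)) := by
      apply hbglb
      intro i
      linarith [hall i]
    have haN : a (s + (N:ℝ)) ≤ a s :=
      amono s (s + (N:ℝ)) hs (by linarith [Nat.cast_nonneg (α := ℝ) N])
    simp only [hρdef]
    linarith
  have spanmono : ∀ s t, 0 ≤ s → s ≤ t → a t - b t ≤ a s - b s :=
    fun s t hs hst => by linarith [amono s t hs hst, bmono s t hs hst]
  have hiter : ∀ n : ℕ, a ((n:ℝ) * N) - b ((n:ℝ) * N) ≤ ρ^n * (a 0 - b 0) := by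
    intro n
    induction n with
    | zero => simp
    | succ n ih =>
      have hs : (0:ℝ) ≤ (n:ℝ) * N := by positivity
      have h1 := hcontr ((n:ℝ) * N) hs
      have h2 : ((n+1 : ℕ):ℝ) * N = (n:ℝ) * N + N := by push_cast; ring
      rw [h2]
      calc a ((n:ℝ) * N + N) - b ((n:ℝ) * N + N) ≤ ρ * (a ((n:ℝ) * N) - b ((n:ℝ) * N)) := h1
        _ ≤ ρ * (ρ^n * (a 0 - b 0)) := mul_le_mul_of_nonneg_left ih hρ0
        _ = ρ^(n+1) * (a 0 - b 0) := by ring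
  have hspan_tend : Tendsto (fun t => a t - b t) atTop (𝓝 0) := by
    rw [Metric.tendsto_atTop]
    intro ε hε
    have hpow : Tendsto (fun n : ℕ => ρ^n * (a 0 - b 0)) atTop (𝓝 0) := by
      have := tendsto_pow_atTop_nhds_zero_of_lt_one hρ0 hρ1
      simpa using this.mul_const (a 0 - b 0)
    obtain ⟨n, hn⟩ := (hpow.eventually_lt_const hε).exists
    refine ⟨(n:ℝ) * N, fun t ht => ?_⟩
    have hs0 : (0:ℝ) ≤ (n:ℝ) * N := by positivity
    have h1 : a t - b t ≤ ρ^n * (a 0 - b 0) :=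
      le_trans (spanmono ((n:ℝ) * N) t hs0 ht) (hiter n)
    rw [Real.dist_eq, sub_zero, abs_of_nonneg (hspan t)]
    linarith
  -- differences converge to 0
  have hdiff : ∀ i : Fin N, Tendsto (fun t => w t i - w t N') atTop (𝓝 0) := by
    intro i
    have hub : ∀ t, w t i - w t N' ≤ a t - b t := fun t => by linarith [hlea t i, hble t N']
    have hlb : ∀ t, -(a t - b t) ≤ w t i - w t N' := fun t => by linarith [hlea t N', hble t i]
    have hneg : Tendsto (fun t => -(a t - b t)) atTop (𝓝 0) := by simpa using hspan_tend.neg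
    exact tendsto_of_tendsto_of_tendsto_of_le_of_le hneg hspan_tend hlb hub
  -- P at coordinate N' converges to 0
  have hPbound : ∀ t, 0 ≤ t → |P t N'| ≤ Λ * (a t - b t) := by
    intro t ht
    rw [abs_le]
    constructor
    · have h1 := hPlow0 t t ht le_rfl N'
      have h2 : w t N' - b t ≤ a t - b t := by linarith [hlea t N']
      nlinarith [mul_le_mul_of_nonneg_left h2 hΛ0]
    · obtain ⟨u', hu'⟩ := hGmem Vstar N'
      have h1 : G (fun j => Vstar j + w t j) N' ≤ r N' u' + ∑ j, q N' j u' * (Vstar j + w t j) :=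
        hGle _ N' u'
      have h2 : ∑ j, q N' j u' * (Vstar j + w t j)
          = ∑ j, q N' j u' * Vstar j + ∑ j, q N' j u' * w t j := by
        rw [← Finset.sum_add_distrib]
        exact Finset.sum_congr rfl fun j _ => by ring
      have hβ2 : r N' u' + ∑ j, q N' j u' * Vstar j = β := by rw [← hu', hHJB]
      have h3 : ∑ j, q N' j u' * w t j ≤ Λ * (a t - b t) := by
        rw [hsum N' u' (w t)]
        have h4 : ∀ j ∈ Finset.univ.erase N',
            q N' j u' * (w t j - w t N') ≤ q N' j u' * (a t - b t) := fun j hj =>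
          mul_le_mul_of_nonneg_left (by linarith [hlea t j, hble t N'])
            (hqoff N' j (Ne.symm (Finset.mem_erase.1 hj).1) u')
        calc ∑ j ∈ Finset.univ.erase N', q N' j u' * (w t j - w t N')
            ≤ ∑ j ∈ Finset.univ.erase N', q N' j u' * (a t - b t) := Finset.sum_le_sum h4
          _ = (∑ j ∈ Finset.univ.erase N', q N' j u') * (a t - b t) := by
              rw [Finset.sum_mul]
          _ ≤ Λ * (a t - b t) := mul_le_mul_of_nonneg_right (hΛ N' u') (hspan t)
      have h5 := hPw t N'
      rw [h5]
      linarith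
  have hPN_tend : Tendsto (fun t => P t N') atTop (𝓝 0) := by
    have hΛspan : Tendsto (fun t => Λ * (a t - b t)) atTop (𝓝 0) := by
      simpa using hspan_tend.const_mul Λ
    have hneg : Tendsto (fun t => -(Λ * (a t - b t))) atTop (𝓝 0) := by simpa using hΛspan.neg
    apply tendsto_of_tendsto_of_tendsto_of_le_of_le' hneg hΛspan
    · filter_upwards [eventually_ge_atTop (0:ℝ)] with t ht
      linarith [abs_le.1 (hPbound t ht) |>.1]
    · filter_upwards [eventually_ge_atTop (0:ℝ)] with t ht
      linarith [abs_le.1 (hPbound t ht) |>.2]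
  -- convergence of h at coordinate N'
  have hhN_tend : Tendsto (fun t => h t N') atTop (𝓝 β) := by
    rw [Metric.tendsto_atTop]
    intro ε hε
    obtain ⟨T₀, hT₀⟩ := (Metric.tendsto_atTop.1 hPN_tend) (ε/4) (by positivity)
    set t₀ := max T₀ 0 with ht₀def
    have ht₀0 : (0:ℝ) ≤ t₀ := le_max_right _ _
    have hPb : ∀ τ, t₀ ≤ τ → |P τ N'| ≤ ε/4 := by
      intro τ hτ
      have := hT₀ τ (le_trans (le_max_left _ _) hτ)
      rw [Real.dist_eq, sub_zero] at this
      linarith [le_of_lt (lt_of_abs_lt this), abs_le.1 (le_of_lt this) |>.1,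
        abs_le.1 (le_of_lt this) |>.2, abs_abs (P τ N')]
    have hB0 : 0 ≤ |h t₀ N' - β + ε/4| + |β + ε/4 - h t₀ N'| :=
      add_nonneg (abs_nonneg _) (abs_nonneg _)
    have hexp_tend : Tendsto (fun t : ℝ => Real.exp (t₀ - t) * (|h t₀ N' - β + ε/4| + |β + ε/4 - h t₀ N'|)) atTop (𝓝 0) := by
      have h1 : Tendsto (fun t : ℝ => t₀ - t) atTop atBot := by
        simpa [sub_eq_add_neg] using tendsto_atBot_add_const_left atTop t₀
          (tendsto_neg_atTop_atBot (G := ℝ))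
      have h2 : Tendsto (fun t : ℝ => Real.exp (t₀ - t)) atTop (𝓝 0) :=
        Real.tendsto_exp_atBot.comp h1
      simpa using h2.mul_const (|h t₀ N' - β + ε/4| + |β + ε/4 - h t₀ N'|)
    have hev := (hexp_tend.eventually_lt_const (show (0:ℝ) < ε/2 by positivity)).and
      (eventually_ge_atTop t₀)
    rw [eventually_atTop] at hev
    obtain ⟨T, hT⟩ := hev
    refine ⟨T, fun t ht => ?_⟩
    obtain ⟨hexp, htt0⟩ := hT t ht
    -- lower estimate
    have key1 := helper_exp (zero_le_one) (fun τ => h τ N' - β + ε/4)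
      (fun τ => P τ N' + β - h τ N') ht₀0 htt0 (le_refl (0:ℝ))
      (fun τ hτ => by
        have h1 := hasDerivWithinAt_pi.1 (hode τ (le_trans ht₀0 hτ.1)) N'
        have h2 := h1.sub_const (β - ε/4)
        have hfe : (fun τ => h τ N' - (β - ε/4)) = (fun τ => h τ N' - β + ε/4) := by
          funext τ; ring
        rw [hfe] at h2
        refine h2.congr_deriv ?_
        simp only [hPdef]
        ring)
      (fun τ hτ => by
        have := hPb τ hτ.1
        have h3 := abs_le.1 this |>.1
        linarith)
    have key2 := helper_exp (zero_le_one) (fun τ => β + ε/4 - h τ N')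
      (fun τ => -(P τ N' + β - h τ N')) ht₀0 htt0 (le_refl (0:ℝ))
      (fun τ hτ => by
        have h1 := hasDerivWithinAt_pi.1 (hode τ (le_trans ht₀0 hτ.1)) N'
        have h2 := h1.const_sub (β + ε/4)
        refine h2.congr_deriv ?_
        simp only [hPdef]
        ring)
      (fun τ hτ => by
        have := hPb τ hτ.1
        have h3 := abs_le.1 this |>.2
        linarith)
    have harg : (-1:ℝ) * (t - t₀) = t₀ - t := by ring
    rw [harg] at key1 key2
    have hE0 : (0:ℝ) < Real.exp (t₀ - t) := Real.exp_pos _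
    have hb1 : -(|h t₀ N' - β + ε/4| + |β + ε/4 - h t₀ N'|) ≤ h t₀ N' - β + ε/4 := by
      have h01 := neg_abs_le (h t₀ N' - β + ε/4)
      have h02 := abs_nonneg (β + ε/4 - h t₀ N')
      linarith
    have hb2 : -(|h t₀ N' - β + ε/4| + |β + ε/4 - h t₀ N'|) ≤ β + ε/4 - h t₀ N' := by
      have h01 := neg_abs_le (β + ε/4 - h t₀ N')
      have h02 := abs_nonneg (h t₀ N' - β + ε/4)
      linarith
    rw [Real.dist_eq, abs_lt]
    constructor
    · nlinarith [key1, mul_le_mul_of_nonneg_left hb1 hE0.le]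
    · nlinarith [key2, mul_le_mul_of_nonneg_left hb2 hE0.le]
  -- final assembly
  rw [tendsto_pi_nhds]
  intro i
  have hident : ∀ t, h t i = (w t i - w t N') + h t N' + Vstar i := by
    intro t
    simp only [hwdef]
    rw [hnorm]
    ring
  have hlim : Tendsto (fun t => (w t i - w t N') + h t N' + Vstar i) atTop
      (𝓝 (0 + β + Vstar i)) := ((hdiff i).add hhN_tend).add_const (Vstar i)
  rw [show (0:ℝ) + β + Vstar i = Vstar i + β by ring] at hlim
  exact Tendsto.congr (fun t => (hident t).symm) hlim
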